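/- Every tree T on n ≥ 2 vertices satisfies CD(T) > √(n−1). In particular, the path P_n satisfies CD(P_n) > √(n−1). -/

import Mathlib

open SimpleGraph

/-- A set `B` is a centroidal locating set of `G` if every pair of distinct vertices is
distinguished by the relative distances to two vertices of `B`. -/
def CentroidalLocating {V : Type*} (G : SimpleGraph V) (B : Set V) : Prop :=
  ∀ ⦃x y : V⦄, x ≠ y → ∃ b1 ∈ B, ∃ b2 ∈ B,
    (G.dist x b1 ≤ G.dist x b2 ∧ G.dist y b2 < G.dist y b1) ∨
    (G.dist y b1 ≤ G.dist y b2 ∧ G.dist x b2 < G.dist x b1)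

/-- The centroidal dimension: minimum size of a centroidal locating set. -/
noncomputable def CD {V : Type*} (G : SimpleGraph V) : ℕ :=
  sInf {k | ∃ B : Set V, B.ncard = k ∧ CentroidalLocating G B}

section Aux

variable {V : Type*} [DecidableEq V] {G : SimpleGraph V}

private lemma aux_dist_add_dist {z c u : V} (p : G.Walk z c) (hp : p.length = G.dist z c)
    (hu : u ∈ p.support) : G.dist z u + G.dist u c ≤ G.dist z c := by
  have h1 : G.dist z u ≤ (p.takeUntil u hu).length := SimpleGraph.dist_le _
  have h2 : G.dist u c ≤ (p.dropUntil u hu).length := SimpleGraph.dist_le _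
  have h3 : (p.takeUntil u hu).length + (p.dropUntil u hu).length = p.length := by
    rw [← SimpleGraph.Walk.length_append, p.take_spec hu]
  omega

private lemma exists_walk_support_le (hG : G.Connected) {z b1 b2 : V}
    (h : G.dist z b1 ≤ G.dist z b2) :
    ∃ p : G.Walk z b1, ∀ u ∈ p.support, G.dist u b1 ≤ G.dist u b2 := by
  obtain ⟨p, hp⟩ := hG.exists_walk_length_eq_dist z b1
  refine ⟨p, fun u hu => ?_⟩
  have h1 := aux_dist_add_dist p hp hu
  have h2 : G.dist z b2 ≤ G.dist z u + G.dist u b2 := hG.dist_triangle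
  omega

private lemma exists_walk_support_lt (hG : G.Connected) {z b1 b2 : V}
    (h : G.dist z b2 < G.dist z b1) :
    ∃ p : G.Walk z b2, ∀ u ∈ p.support, G.dist u b2 < G.dist u b1 := by
  obtain ⟨p, hp⟩ := hG.exists_walk_length_eq_dist z b2
  refine ⟨p, fun u hu => ?_⟩
  have h1 := aux_dist_add_dist p hp hu
  have h2 : G.dist z b1 ≤ G.dist z u + G.dist u b1 := hG.dist_triangle
  omega

/-- In a tree, at most one edge can be "cut" by a given ordered pair `(b1, b2)`. -/
private lemma cut_unique (hG : G.Connected) (hac : G.IsAcyclic) {b1 b2 x1 y1 x2 y2 : V}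
    (a1 : G.Adj x1 y1) (a2 : G.Adj x2 y2)
    (hx1 : G.dist x1 b1 ≤ G.dist x1 b2) (hy1 : G.dist y1 b2 < G.dist y1 b1)
    (hx2 : G.dist x2 b1 ≤ G.dist x2 b2) (hy2 : G.dist y2 b2 < G.dist y2 b1) :
    s(x1, y1) = s(x2, y2) := by
  by_contra hne
  have hbr : G.IsBridge s(x1, y1) := isAcyclic_iff_forall_adj_isBridge.mp hac a1
  rw [isBridge_iff_adj_and_forall_walk_mem_edges] at hbr
  obtain ⟨p1, hp1⟩ := exists_walk_support_le hG hx1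
  obtain ⟨p2, hp2⟩ := exists_walk_support_le hG hx2
  obtain ⟨q1, hq1⟩ := exists_walk_support_lt hG hy1
  obtain ⟨q2, hq2⟩ := exists_walk_support_lt hG hy2
  have hmem := hbr (((p1.append p2.reverse).append (SimpleGraph.Walk.cons a2 q2)).append
    q1.reverse)
  simp only [SimpleGraph.Walk.edges_append, SimpleGraph.Walk.edges_reverse,
    SimpleGraph.Walk.edges_cons, List.mem_append, List.mem_reverse, List.mem_cons] at hmem
  rcases hmem with (((h | h) | (h | h)) | h)
  · have hy : y1 ∈ p1.support := p1.snd_mem_support_of_mem_edges h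
    exact absurd (hp1 y1 hy) (by omega)
  · have hy : y1 ∈ p2.support := p2.snd_mem_support_of_mem_edges h
    exact absurd (hp2 y1 hy) (by omega)
  · exact hne h
  · have hx : x1 ∈ q2.support := q2.fst_mem_support_of_mem_edges h
    exact absurd (hq2 x1 hx) (by omega)
  · have hx : x1 ∈ q1.support := q1.fst_mem_support_of_mem_edges h
    exact absurd (hq1 x1 hx) (by omega)

end Aux

theorem sqrt_lt_CD_of_tree {V : Type*} [Fintype V] (G : SimpleGraph V)
    (hG : G.Connected) (hacyclic : G.IsAcyclic) (n : ℕ)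
    (hcard : Fintype.card V = n) (hn : 2 ≤ n) :
    Real.sqrt ((n : ℝ) - 1) < (CD G : ℝ) := by
  classical
  haveI : Nonempty V := Fintype.card_pos_iff.mp (by omega)
  -- The defining set of CD is nonempty (the whole vertex set works).
  have huniv : CentroidalLocating G (Set.univ : Set V) := by
    intro x y hxy
    refine ⟨x, trivial, y, trivial, Or.inl ⟨?_, ?_⟩⟩
    · rw [SimpleGraph.dist_self]; exact Nat.zero_le _
    · rw [SimpleGraph.dist_self]; exact hG.pos_dist_of_ne (Ne.symm hxy)
  have hSne : {k | ∃ B : Set V, B.ncard = k ∧ CentroidalLocating G B}.Nonempty :=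
    ⟨(Set.univ : Set V).ncard, Set.univ, rfl, huniv⟩
  obtain ⟨B, hBcard, hBloc⟩ := Nat.sInf_mem hSne
  have hk : CD G = B.ncard := hBcard.symm
  set k := B.ncard with hkdef
  -- Finset version of B
  have hBfin : B.Finite := B.toFinite
  set Bf : Finset V := hBfin.toFinset with hBf
  have hBfcard : Bf.card = k := (Set.ncard_eq_toFinset_card B hBfin).symm
  -- The key counting: every edge injects into ordered pairs of distinct elements of B.
  set Q : Sym2 V → V × V → Prop := fun e p =>
    p.1 ∈ B ∧ p.2 ∈ B ∧ ∃ x y : V, G.Adj x y ∧ e = s(x, y) ∧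
      G.dist x p.1 ≤ G.dist x p.2 ∧ G.dist y p.2 < G.dist y p.1 with hQdef
  have hex : ∀ e ∈ G.edgeFinset, ∃ p : V × V, Q e p := by
    intro e he
    rw [SimpleGraph.mem_edgeFinset] at he
    induction e with
    | _ u v =>
      have hadj : G.Adj u v := he
      obtain ⟨b1, hb1, b2, hb2, hcase⟩ := hBloc hadj.ne
      rcases hcase with ⟨h1, h2⟩ | ⟨h1, h2⟩
      · exact ⟨(b1, b2), hb1, hb2, u, v, hadj, rfl, h1, h2⟩
      · exact ⟨(b1, b2), hb1, hb2, v, u, hadj.symm, Sym2.eq_swap, h1, h2⟩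
  set F : Sym2 V → V × V := fun e =>
    if h : ∃ p : V × V, Q e p then h.choose else Classical.arbitrary _ with hF
  have hFspec : ∀ e ∈ G.edgeFinset, Q e (F e) := by
    intro e he
    have h := hex e he
    simp only [hF, dif_pos h]
    exact h.choose_spec
  have hmaps : ∀ e ∈ G.edgeFinset, F e ∈ Bf.offDiag := by
    intro e he
    obtain ⟨h1, h2, x, y, hadj, hexy, hle, hlt⟩ := hFspec e he
    rw [Finset.mem_offDiag]
    refine ⟨by simpa [hBf] using h1, by simpa [hBf] using h2, ?_⟩
    intro hcontra
    rw [hcontra] at hlt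
    exact absurd hlt (lt_irrefl _)
  have hinj : Set.InjOn F G.edgeFinset := by
    intro e1 he1 e2 he2 heq
    obtain ⟨h11, h12, x1, y1, ha1, he1', hle1, hlt1⟩ := hFspec e1 he1
    obtain ⟨h21, h22, x2, y2, ha2, he2', hle2, hlt2⟩ := hFspec e2 he2
    rw [heq] at hle1 hlt1
    rw [he1', he2']
    exact cut_unique hG hacyclic ha1 ha2 hle1 hlt1 hle2 hlt2
  have hcount : G.edgeFinset.card ≤ Bf.offDiag.card :=
    Finset.card_le_card_of_injOn F hmaps hinj
  rw [Finset.offDiag_card, hBfcard] at hcount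
  have hedges : G.edgeFinset.card + 1 = n := by
    rw [← hcard]
    exact SimpleGraph.IsTree.card_edgeFinset ⟨hG, hacyclic⟩
  -- arithmetic: n - 1 ≤ k*k - k, n ≥ 2 ⇒ k ≥ 1 and n - 1 < k*k
  have hkk : k ≤ k * k := Nat.le_mul_of_pos_left k (by
    rcases Nat.eq_zero_or_pos k with h0 | h0
    · exfalso; rw [h0] at hcount; omega
    · exact h0)
  have hkpos : 0 < k := by
    rcases Nat.eq_zero_or_pos k with h0 | h0
    · exfalso; rw [h0] at hcount; omega
    · exact h0
  have hnat : n - 1 < k * k := by omega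
  have hkR : (0 : ℝ) < (k : ℝ) := by exact_mod_cast hkpos
  rw [hk, Real.sqrt_lt' hkR]
  have : ((n : ℝ) - 1) = ((n - 1 : ℕ) : ℝ) := by
    have h1 : 1 ≤ n := by omega
    push_cast [Nat.cast_sub h1]
    ring
  rw [this]
  have : ((n - 1 : ℕ) : ℝ) < ((k * k : ℕ) : ℝ) := by exact_mod_cast hnat
  calc ((n - 1 : ℕ) : ℝ) < ((k * k : ℕ) : ℝ) := this
    _ = (k : ℝ) ^ 2 := by push_cast; ring
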